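/- Let X be a compact metric space, Γ a monoid acting minimally on X by continuous maps, and A : Γ × X → GL(n,ℝ) a continuous linear cocycle over this action. Assume there exist a point x₀ ∈ X and a constant C > 0 such that for all f ∈ Γ, max(‖A(f,x₀)‖, ‖A(f,x₀)⁻¹‖) ≤ C. Then A is cohomologous to an orthogonal cocycle: there exists a continuous map B : X → GL(n,ℝ) such that for all x ∈ X and all f ∈ Γ, the matrix B(f·x)⁻¹ · A(f,x) · B(x) lies in the orthogonal group O(n,ℝ). -/

import Mathlib

set_option maxHeartbeats 1000000

open Matrix Filter Topology

namespace BLC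

variable {n : ℕ}

local notation "Mat" => Matrix (Fin n) (Fin n) ℝ

instance : FirstCountableTopology Mat :=
  inferInstanceAs (FirstCountableTopology (Fin n → Fin n → ℝ))


lemma ct_eq (M : Mat) : Mᴴ = Mᵀ := by
  ext i j; simp [Matrix.conjTranspose_apply]

lemma psd_iff {M : Mat} :
    M.PosSemidef ↔ M.IsHermitian ∧ ∀ v : Fin n → ℝ, 0 ≤ v ⬝ᵥ M *ᵥ v := by
  constructor
  · intro h; exact ⟨h.1, fun v => by simpa using (posSemidef_iff_dotProduct_mulVec.mp h).2 v⟩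
  · intro h; exact posSemidef_iff_dotProduct_mulVec.mpr ⟨h.1, fun v => by simpa using h.2 v⟩

lemma psd_qf {M : Mat} (h : M.PosSemidef) (v : Fin n → ℝ) : 0 ≤ v ⬝ᵥ M *ᵥ v :=
  (psd_iff.mp h).2 v

lemma psd_smul {M : Mat} (h : M.PosSemidef) {a : ℝ} (ha : 0 ≤ a) : (a • M).PosSemidef := by
  refine psd_iff.mpr ⟨?_, fun v => ?_⟩
  · unfold Matrix.IsHermitian
    rw [Matrix.conjTranspose_smul, h.1]
    simp
  · rw [Matrix.smul_mulVec, dotProduct_smul]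
    exact mul_nonneg ha (psd_qf h v)

lemma psd_congr {M : Mat} (h : M.PosSemidef) (B : Mat) : (Bᵀ * M * B).PosSemidef := by
  have := h.conjTranspose_mul_mul_same (B := B)
  rwa [ct_eq] at this

lemma qf_congr (M B : Mat) (v : Fin n → ℝ) :
    v ⬝ᵥ (Bᵀ * M * B) *ᵥ v = (B *ᵥ v) ⬝ᵥ M *ᵥ (B *ᵥ v) := by
  rw [← Matrix.mulVec_mulVec, ← Matrix.mulVec_mulVec, dotProduct_mulVec,
    Matrix.vecMul_transpose]




lemma psd_iff' {M : Mat} :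
    M.PosSemidef ↔ M.IsHermitian ∧ ∀ v : Fin n → ℝ, 0 ≤ v ⬝ᵥ M *ᵥ v := by
  constructor
  · intro h; exact ⟨h.1, fun v => by simpa using (posSemidef_iff_dotProduct_mulVec.mp h).2 v⟩
  · intro h; exact posSemidef_iff_dotProduct_mulVec.mpr ⟨h.1, fun v => by simpa using h.2 v⟩

lemma isClosed_psd : IsClosed {M : Mat | M.PosSemidef} := by
  have : {M : Mat | M.PosSemidef}
      = {M : Mat | Mᴴ = M} ∩ ⋂ v : Fin n → ℝ, {M : Mat | 0 ≤ v ⬝ᵥ M *ᵥ v} := by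
    ext M
    simp only [Set.mem_setOf_eq, Set.mem_inter_iff, Set.mem_iInter, psd_iff']
    rfl
  rw [this]
  refine IsClosed.inter (isClosed_eq ?_ continuous_id) (isClosed_iInter fun v => ?_)
  · exact continuous_id.matrix_conjTranspose
  · exact isClosed_le continuous_const
      (continuous_const.dotProduct (continuous_id.matrix_mulVec continuous_const))

lemma dot_single_mulVec (Q : Mat) (i j : Fin n) :
    Pi.single i (1:ℝ) ⬝ᵥ Q *ᵥ Pi.single j 1 = Q i j := by
  rw [Matrix.mulVec_single, single_dotProduct]
  simp

lemma isCompact_K : IsCompact {Q : Mat | Q.PosSemidef ∧ (1 - Q).PosSemidef} := by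
  have hcomp : IsCompact ((Set.univ.pi fun _ : Fin n =>
      Set.univ.pi fun _ : Fin n => Set.Icc (-1:ℝ) 1) : Set Mat) :=
    isCompact_univ_pi fun _ => isCompact_univ_pi fun _ => isCompact_Icc
  refine IsCompact.of_isClosed_subset hcomp ?_ ?_
  · exact IsClosed.inter isClosed_psd
      (isClosed_psd.preimage (continuous_const.sub continuous_id))
  · rintro Q ⟨h1, h2⟩
    have hd : ∀ c : Fin n, 0 ≤ Q c c ∧ Q c c ≤ 1 := by
      intro c
      have e1 := (psd_iff'.mp h1).2 (Pi.single c 1)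
      have e2 := (psd_iff'.mp h2).2 (Pi.single c 1)
      rw [dot_single_mulVec] at e1
      have : Pi.single c (1:ℝ) ⬝ᵥ (1 - Q) *ᵥ Pi.single c 1 = 1 - Q c c := by
        rw [dot_single_mulVec]; simp [Matrix.one_apply]
      rw [this] at e2
      constructor <;> linarith
    have key : ∀ a b : Fin n, a ≠ b → |Q a b| ≤ 1 := by
      intro a b hab
      set v : ℝ → (Fin n → ℝ) := fun s => (Pi.single a 1 : Fin n → ℝ) + s • (Pi.single b 1 : Fin n → ℝ) with hv
      have expand : ∀ (M : Mat) (s : ℝ), v s ⬝ᵥ M *ᵥ v s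
          = M a a + s * (M a b + M b a) + s * s * M b b := by
        intro M s
        simp only [hv, add_dotProduct, Matrix.mulVec_add, dotProduct_add,
          smul_dotProduct, Matrix.mulVec_smul, dotProduct_smul]
        rw [dot_single_mulVec, dot_single_mulVec, dot_single_mulVec, dot_single_mulVec]
        simp only [smul_eq_mul]; ring
      have hqv : ∀ s : ℝ, v s ⬝ᵥ v s = 1 + s * s := by
        intro s
        have h0 : v s ⬝ᵥ v s = v s ⬝ᵥ (1 : Mat) *ᵥ v s := by rw [Matrix.one_mulVec]
        rw [h0, expand 1 s, Matrix.one_apply_eq, Matrix.one_apply_eq,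
          Matrix.one_apply_ne hab, Matrix.one_apply_ne hab.symm]
        ring
      have hcase : ∀ s : ℝ, 0 ≤ Q a a + s * (Q a b + Q b a) + s * s * Q b b ∧
          Q a a + s * (Q a b + Q b a) + s * s * Q b b ≤ 1 + s * s := by
        intro s
        have e1 := (psd_iff'.mp h1).2 (v s)
        have e2 := (psd_iff'.mp h2).2 (v s)
        rw [expand] at e1
        have : v s ⬝ᵥ (1 - Q) *ᵥ v s
            = (1 + s * s) - (Q a a + s * (Q a b + Q b a) + s * s * Q b b) := by
          simp only [Matrix.sub_mulVec, dotProduct_sub, Matrix.one_mulVec]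
          rw [expand, hqv]
        rw [this] at e2
        exact ⟨e1, by linarith⟩
      have hsym : Q b a = Q a b := by
        have := h1.1
        rw [Matrix.IsHermitian] at this
        conv_lhs => rw [← this]
        simp [Matrix.conjTranspose_apply]
      have h1' := (hcase 1).1
      have h2' := (hcase (-1)).1
      rw [hsym] at h1' h2'
      have hda := hd a; have hdb := hd b
      rw [abs_le]; constructor <;> linarith
    apply Set.mem_pi.mpr; intro i _
    apply Set.mem_pi.mpr; intro j' _
    simp only [Set.mem_Icc, ← abs_le]
    rcases eq_or_ne i j' with rfl | hne
    · have := hd i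
      rw [abs_le]; constructor <;> linarith [this.1, this.2]
    · exact key i j' hne



lemma psd_qf' {M : Mat} (h : M.PosSemidef) (v : Fin n → ℝ) : 0 ≤ v ⬝ᵥ M *ᵥ v := by
  simpa using (posSemidef_iff_dotProduct_mulVec.mp h).2 v

lemma eigb_dot_self {M : Mat} (hH : M.IsHermitian) (i : Fin n) :
    (⇑(hH.eigenvectorBasis i) : Fin n → ℝ) ⬝ᵥ ⇑(hH.eigenvectorBasis i) = 1 := by
  have hnorm : ‖hH.eigenvectorBasis i‖ = 1 := hH.eigenvectorBasis.orthonormal.1 i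
  have : (inner ℝ (hH.eigenvectorBasis i) (hH.eigenvectorBasis i) : ℝ)
      = (⇑(hH.eigenvectorBasis i) : Fin n → ℝ) ⬝ᵥ ⇑(hH.eigenvectorBasis i) := by
    rw [EuclideanSpace.inner_eq_star_dotProduct]; simp [dotProduct_comm]
  rw [← this, real_inner_self_eq_norm_mul_norm, hnorm]; norm_num

lemma eigb_qf {M : Mat} (hH : M.IsHermitian) (i : Fin n) :
    (⇑(hH.eigenvectorBasis i) : Fin n → ℝ) ⬝ᵥ M *ᵥ ⇑(hH.eigenvectorBasis i)
      = hH.eigenvalues i := by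
  rw [hH.mulVec_eigenvectorBasis, dotProduct_smul, smul_eq_mul, eigb_dot_self hH i,
    mul_one]

lemma eig_le_one {Q : Mat} (h1 : Q.PosSemidef) (h2 : (1 - Q).PosSemidef) (i : Fin n) :
    h1.1.eigenvalues i ≤ 1 := by
  have e2 := psd_qf' h2 (⇑(h1.1.eigenvectorBasis i))
  rw [Matrix.sub_mulVec, dotProduct_sub, Matrix.one_mulVec, eigb_qf h1.1 i,
    eigb_dot_self h1.1 i] at e2
  linarith

lemma psd_det_nonneg {Q : Mat} (h : Q.PosSemidef) : 0 ≤ Q.det := by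
  rw [h.1.det_eq_prod_eigenvalues]
  exact Finset.prod_nonneg fun i _ => h.eigenvalues_nonneg i

lemma det_le_one {Q : Mat} (h1 : Q.PosSemidef) (h2 : (1 - Q).PosSemidef) : Q.det ≤ 1 := by
  rw [h1.1.det_eq_prod_eigenvalues]
  exact Finset.prod_le_one (fun i _ => h1.eigenvalues_nonneg i) (fun i _ => eig_le_one h1 h2 i)

lemma posdef_of_psd_det_ne {Q : Mat} (h : Q.PosSemidef) (hdet : Q.det ≠ 0) : Q.PosDef := by
  refine posDef_iff_dotProduct_mulVec.mpr ⟨h.1, fun v hv => ?_⟩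
  have hq := (posSemidef_iff_dotProduct_mulVec.mp h).2 v
  rcases lt_or_eq_of_le hq with hlt | heq
  · simpa using hlt
  · exfalso
    have : Q *ᵥ v = 0 := (h.dotProduct_mulVec_zero_iff v).mp heq.symm
    exact hdet (Matrix.exists_mulVec_eq_zero_iff.mp ⟨v, hv, this⟩)

lemma eq_one_of_eigs {M : Mat} (hH : M.IsHermitian) (h : ∀ i, hH.eigenvalues i = 1) :
    M = 1 := by
  have hdiag : Matrix.diagonal (RCLike.ofReal ∘ hH.eigenvalues) = (1 : Mat) := by
    have hfun : (RCLike.ofReal ∘ hH.eigenvalues : Fin n → ℝ) = fun _ => 1 := by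
      funext i; simp [h i]
    rw [hfun]
    exact Matrix.diagonal_one
  calc M = _ := hH.spectral_theorem
  _ = 1 := by
    rw [hdiag, map_one]

lemma qf_congr' (M B : Mat) (v : Fin n → ℝ) :
    v ⬝ᵥ (Bᵀ * M * B) *ᵥ v = (B *ᵥ v) ⬝ᵥ M *ᵥ (B *ᵥ v) := by
  rw [← Matrix.mulVec_mulVec, ← Matrix.mulVec_mulVec, dotProduct_mulVec,
    Matrix.vecMul_transpose]

lemma pd_congr {M : Mat} (h : M.PosDef) {B : Mat} (hB : B.det ≠ 0) :
    (Bᵀ * M * B).PosDef := by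
  refine posDef_iff_dotProduct_mulVec.mpr ⟨?_, fun v hv => ?_⟩
  · have hBt : Bᴴ = Bᵀ := by ext i j; simp [Matrix.conjTranspose_apply]
    have hBtt : (Bᵀ)ᴴ = B := by ext i j; simp [Matrix.conjTranspose_apply]
    show (Bᵀ * M * B)ᴴ = Bᵀ * M * B
    rw [Matrix.conjTranspose_mul, Matrix.conjTranspose_mul, hBt, hBtt, h.1, Matrix.mul_assoc]
  · have hBv : B *ᵥ v ≠ 0 := by
      intro hz
      exact hB (Matrix.exists_mulVec_eq_zero_iff.mp ⟨v, hv, hz⟩)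
    have := (posDef_iff_dotProduct_mulVec.mp h).2 hBv
    simpa [qf_congr'] using this

lemma sym_of_psd {M : Mat} (h : M.PosSemidef) : Mᵀ = M := by
  ext i j
  rw [Matrix.transpose_apply]
  conv_lhs => rw [← h.1]
  simp [Matrix.conjTranspose_apply]

lemma minkowski {P Q : Mat} (hP : P.PosDef) (hQ : Q.PosDef) :
    P.det * Q.det ≤ (((1:ℝ)/2) • (P + Q)).det ^ 2 ∧
    ((((1:ℝ)/2) • (P + Q)).det ^ 2 = P.det * Q.det → P = Q) := by
  classical
  obtain ⟨S, hS, hSS⟩ : ∃ S : Mat, S.PosSemidef ∧ S * S = P := by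
    open scoped MatrixOrder in
    exact ⟨CFC.sqrt P, (CFC.sqrt_nonneg P).posSemidef,
      CFC.sqrt_mul_sqrt_self P hP.posSemidef.nonneg⟩
  have hdetSS : S.det * S.det = P.det := by rw [← Matrix.det_mul, hSS]
  have hPdet : 0 < P.det := hP.det_pos
  have hdetS_ne : S.det ≠ 0 := by
    intro h0; rw [h0, mul_zero] at hdetSS; exact hPdet.ne' hdetSS.symm
  have hSpd : S.PosDef := posdef_of_psd_det_ne hS hdetS_ne
  have hSt : Sᵀ = S := sym_of_psd hS
  have hSunit : IsUnit S.det := isUnit_iff_ne_zero.mpr hdetS_ne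
  set Si := S⁻¹ with hSidef
  have hSit : Siᵀ = Si := by rw [hSidef, Matrix.transpose_nonsing_inv, hSt]
  have hSiS : Si * S = 1 := Matrix.nonsing_inv_mul S hSunit
  have hSSi : S * Si = 1 := Matrix.mul_nonsing_inv S hSunit
  have hdetSi : Si.det = (S.det)⁻¹ := by
    rw [hSidef, Matrix.det_nonsing_inv, Ring.inverse_eq_inv]
  set M := Siᵀ * Q * Si with hMdef
  have hM : M.PosDef := pd_congr hQ (by rw [hdetSi]; exact inv_ne_zero hdetS_ne)
  have hMeq : M = Si * Q * Si := by rw [hMdef, hSit]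
  -- P + Q = S * (1 + M) * S
  have hkey : S * (1 + M) * S = P + Q := by
    rw [hMeq, Matrix.mul_add, Matrix.add_mul, mul_one, hSS]
    congr 1
    calc S * (Si * Q * Si) * S = (S * Si) * Q * (Si * S) := by
          simp only [Matrix.mul_assoc]
    _ = Q := by rw [hSSi, hSiS, one_mul, mul_one]
  have hdet_sum : (P + Q).det = P.det * (1 + M).det := by
    rw [← hkey, Matrix.det_mul, Matrix.det_mul,
      show S.det * (1 + M).det * S.det = S.det * S.det * (1 + M).det from by ring, hdetSS]
  have hdetM : M.det = Q.det / P.det := by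
    rw [hMeq, Matrix.det_mul, Matrix.det_mul, hdetSi, ← hdetSS]
    field_simp
  -- eigenvalues of M
  have hMH : M.IsHermitian := hM.1
  set ev := hMH.eigenvalues with hevdef
  have hev_pos : ∀ i, 0 < ev i := fun i => hM.eigenvalues_pos i
  have hdetM_prod : M.det = ∏ i, ev i := by
    rw [hMH.det_eq_prod_eigenvalues]; norm_num [hevdef]
  -- 1 + M via spectral theorem
  have hU1 : (hMH.eigenvectorUnitary : Mat) * star (hMH.eigenvectorUnitary : Mat) = 1 :=
    Matrix.mem_unitaryGroup_iff.mp (hMH.eigenvectorUnitary).2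
  have hU2 : star (hMH.eigenvectorUnitary : Mat) * (hMH.eigenvectorUnitary : Mat) = 1 :=
    Matrix.mem_unitaryGroup_iff'.mp (hMH.eigenvectorUnitary).2
  have hUnit : IsUnit ((hMH.eigenvectorUnitary : Mat)) :=
    ⟨⟨(hMH.eigenvectorUnitary : Mat), star (hMH.eigenvectorUnitary : Mat), hU1, hU2⟩, rfl⟩
  have hstar_inv : (star (hMH.eigenvectorUnitary : Mat)) = (hMH.eigenvectorUnitary : Mat)⁻¹ :=
    (Matrix.inv_eq_right_inv hU1).symm
  have hdet1M : (1 + M).det = ∏ i, (1 + ev i) := by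
    have hspec := hMH.spectral_theorem
    have h1M : (1 : Mat) + M = (hMH.eigenvectorUnitary : Mat)
        * (Matrix.diagonal (fun i => 1 + ev i))
        * (star (hMH.eigenvectorUnitary : Mat)) := by
      conv_lhs => rw [hspec, Unitary.conjStarAlgAut_apply]
      have hone : (1 : Mat) = (hMH.eigenvectorUnitary : Mat) * 1
          * (star (hMH.eigenvectorUnitary : Mat)) := by
        rw [mul_one, hU1]
      conv_lhs => rw [hone]
      rw [← Matrix.add_mul, ← Matrix.mul_add]
      congr 2
      have : (Matrix.diagonal (RCLike.ofReal ∘ hMH.eigenvalues) : Mat)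
          = Matrix.diagonal ev := by congr 1
      rw [this, ← Matrix.diagonal_one, Matrix.diagonal_add]
    rw [h1M, hstar_inv, Matrix.det_conj hUnit, Matrix.det_diagonal]
  -- the determinant identity
  have hhalf : (((1:ℝ)/2) • (P + Q)).det = P.det * ∏ i, ((1 + ev i) / 2) := by
    rw [Matrix.det_smul, hdet_sum, hdet1M, Fintype.card_fin]
    rw [Finset.prod_div_distrib, Finset.prod_const]
    simp [Finset.card_univ]
    ring
  have hprod_ge : ∀ i (_ : i ∈ Finset.univ (α := Fin n)), ev i ≤ ((1 + ev i)/2)^2 := by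
    intro i _
    nlinarith [sq_nonneg (1 - ev i), (hev_pos i).le]
  have hsq : (((1:ℝ)/2) • (P + Q)).det ^ 2 = P.det^2 * ∏ i, ((1 + ev i)/2)^2 := by
    rw [hhalf, mul_pow, ← Finset.prod_pow]
  have hc1 : P.det^2 * ∏ i, ev i = P.det * Q.det := by
    rw [← hdetM_prod, hdetM]
    field_simp
  constructor
  · rw [hsq, ← hc1]
    have h1 : (∏ i, ev i) ≤ ∏ i, ((1 + ev i)/2)^2 :=
      Finset.prod_le_prod (fun i _ => (hev_pos i).le) hprod_ge
    exact mul_le_mul_of_nonneg_left h1 (by positivity)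
  · intro heq
    have hprod_eq : (∏ i, ev i) = ∏ i, ((1 + ev i)/2)^2 := by
      have h3 : P.det^2 * ∏ i, ev i = P.det^2 * ∏ i, ((1 + ev i)/2)^2 := by
        rw [hc1, ← heq, hsq]
      exact mul_left_cancel₀ (by positivity) h3
    have hev_one : ∀ i, ev i = 1 := by
      intro i
      by_contra hne
      have hlt : ev i < ((1 + ev i)/2)^2 := by
        have h4 : ((1 + ev i)/2)^2 - ev i = ((1 - ev i)/2)^2 := by ring
        have h6 : (1 - ev i) ≠ 0 := by intro h0; exact hne (by linarith)
        have h5 : (0:ℝ) < ((1 - ev i)/2)^2 := by positivity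
        linarith
      have := Finset.prod_lt_prod (f := ev) (g := fun i => ((1 + ev i)/2)^2)
        (fun j _ => hev_pos j) hprod_ge ⟨i, Finset.mem_univ i, hlt⟩
      rw [hprod_eq] at this
      exact lt_irrefl _ this
    have hM1 : M = 1 := eq_one_of_eigs hMH hev_one
    -- Q = S * M * S = S * S = P
    have : S * M * S = Q := by
      rw [hMeq]
      calc S * (Si * Q * Si) * S = (S * Si) * Q * (Si * S) := by simp only [Matrix.mul_assoc]
      _ = Q := by rw [hSSi, hSiS, one_mul, mul_one]
    rw [hM1, mul_one, hSS] at this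
    exact this



section Machinery

variable {Γ : Type*} [Monoid Γ]

def feas (H : Γ → Mat) : Set Mat := {Q | Q.PosSemidef ∧ ∀ g, (H g - Q).PosSemidef}

def IsMaxer (H : Γ → Mat) (Q : Mat) : Prop :=
  Q ∈ feas H ∧ ∀ R ∈ feas H, R.det ≤ Q.det

def Good (H : Γ → Mat) (c : ℝ) : Prop :=
  0 < c ∧ H 1 = 1 ∧ ∀ g, (H g - c • (1 : Mat)).PosSemidef

lemma feas_subset_K {H : Γ → Mat} {c : ℝ} (hH : Good H c) :
    feas H ⊆ {Q : Mat | Q.PosSemidef ∧ (1 - Q).PosSemidef} := by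
  rintro Q ⟨h1, h2⟩
  refine ⟨h1, ?_⟩
  have := h2 1
  rwa [hH.2.1] at this

lemma feas_closed (H : Γ → Mat) : IsClosed (feas H) := by
  have : feas H = {Q : Mat | Q.PosSemidef} ∩ ⋂ g, {Q : Mat | (H g - Q).PosSemidef} := by
    ext Q; simp [feas, Set.mem_iInter]
  rw [this]
  exact IsClosed.inter isClosed_psd (isClosed_iInter fun g =>
    isClosed_psd.preimage (continuous_const.sub continuous_id))

lemma feas_compact {H : Γ → Mat} {c : ℝ} (hH : Good H c) : IsCompact (feas H) :=
  IsCompact.of_isClosed_subset isCompact_K (feas_closed H) (feas_subset_K hH)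

lemma smul_one_mem_feas {H : Γ → Mat} {c : ℝ} (hH : Good H c) : c • (1 : Mat) ∈ feas H :=
  ⟨psd_smul (Matrix.PosSemidef.one) hH.1.le, hH.2.2⟩

lemma exists_maxer {H : Γ → Mat} {c : ℝ} (hH : Good H c) : ∃ Q, IsMaxer H Q := by
  obtain ⟨Q, hQf, hQmax⟩ := (feas_compact hH).exists_isMaxOn ⟨c • 1, smul_one_mem_feas hH⟩
    (Continuous.continuousOn (continuous_id.matrix_det))
  exact ⟨Q, hQf, fun R hR => hQmax hR⟩

lemma maxer_det_lb {H : Γ → Mat} {c : ℝ} (hH : Good H c) {Q : Mat} (hQ : IsMaxer H Q) :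
    c ^ n ≤ Q.det := by
  have := hQ.2 _ (smul_one_mem_feas hH)
  rwa [Matrix.det_smul, Matrix.det_one, mul_one, Fintype.card_fin] at this

lemma maxer_det_pos {H : Γ → Mat} {c : ℝ} (hH : Good H c) {Q : Mat} (hQ : IsMaxer H Q) :
    0 < Q.det :=
  lt_of_lt_of_le (pow_pos hH.1 n) (maxer_det_lb hH hQ)

lemma maxer_pd {H : Γ → Mat} {c : ℝ} (hH : Good H c) {Q : Mat} (hQ : IsMaxer H Q) :
    Q.PosDef :=
  posdef_of_psd_det_ne hQ.1.1 (maxer_det_pos hH hQ).ne'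

lemma maxer_det_le_one {H : Γ → Mat} {c : ℝ} (hH : Good H c) {Q : Mat} (hQ : IsMaxer H Q) :
    Q.det ≤ 1 := by
  have := feas_subset_K hH hQ.1
  exact det_le_one this.1 this.2

lemma feas_convex {H : Γ → Mat} {Q1 Q2 : Mat} (h1 : Q1 ∈ feas H) (h2 : Q2 ∈ feas H) :
    ((1:ℝ)/2) • (Q1 + Q2) ∈ feas H := by
  constructor
  · exact psd_smul (h1.1.add h2.1) (by norm_num)
  · intro g
    have key : H g - ((1:ℝ)/2) • (Q1 + Q2)
        = ((1:ℝ)/2) • (H g - Q1) + ((1:ℝ)/2) • (H g - Q2) := by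
      ext i j
      simp [Matrix.sub_apply, Matrix.add_apply, Matrix.smul_apply]
      ring
    rw [key]
    exact (psd_smul (h1.2 g) (by norm_num)).add (psd_smul (h2.2 g) (by norm_num))

lemma maxer_unique {H : Γ → Mat} {c : ℝ} (hH : Good H c) {Q1 Q2 : Mat}
    (h1 : IsMaxer H Q1) (h2 : IsMaxer H Q2) : Q1 = Q2 := by
  have hdet : Q1.det = Q2.det := le_antisymm (h2.2 _ h1.1) (h1.2 _ h2.1)
  have hR := feas_convex h1.1 h2.1
  have hRle : (((1:ℝ)/2) • (Q1 + Q2)).det ≤ Q1.det := h1.2 _ hR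
  have hRnn : 0 ≤ (((1:ℝ)/2) • (Q1 + Q2)).det := psd_det_nonneg hR.1
  have hmink := minkowski (maxer_pd hH h1) (maxer_pd hH h2)
  apply hmink.2
  have h1' : Q1.det * Q2.det ≤ (((1:ℝ)/2) • (Q1 + Q2)).det ^ 2 := hmink.1
  have h2' : (((1:ℝ)/2) • (Q1 + Q2)).det ^ 2 ≤ Q1.det * Q2.det := by
    calc (((1:ℝ)/2) • (Q1 + Q2)).det ^ 2 ≤ Q1.det ^ 2 := by
          apply pow_le_pow_left₀ hRnn hRle
    _ = Q1.det * Q2.det := by rw [pow_two, hdet]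
  linarith

lemma maxer_push {H K : Γ → Mat} {cH cK : ℝ} (hH : Good H cH) (hK : Good K cK)
    (σ : Γ → Γ) (B : Mat) (hB : B.det ≠ 0)
    (hrel : ∀ g, Bᵀ * K g * B = H (σ g))
    {QH QK : Mat} (hQH : IsMaxer H QH) (hQK : IsMaxer K QK) :
    QH.det ≤ B.det ^ 2 * QK.det ∧
    (QH.det = B.det ^ 2 * QK.det → QH = Bᵀ * QK * B) := by
  have hBunit : IsUnit B.det := isUnit_iff_ne_zero.mpr hB
  have hBBi : B * B⁻¹ = 1 := Matrix.mul_nonsing_inv B hBunit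
  have hBiB : B⁻¹ * B = 1 := Matrix.nonsing_inv_mul B hBunit
  set Bi := B⁻¹ with hBidef
  have hdetBi : Bi.det = (B.det)⁻¹ := by rw [hBidef, Matrix.det_nonsing_inv, Ring.inverse_eq_inv]
  have hconj : ∀ M : Mat, Biᵀ * (Bᵀ * M * B) * Bi = M := by
    intro M
    calc Biᵀ * (Bᵀ * M * B) * Bi = (B * Bi)ᵀ * M * (B * Bi) := by
          rw [Matrix.transpose_mul]
          simp only [Matrix.mul_assoc]
    _ = M := by rw [hBBi, Matrix.transpose_one, one_mul, mul_one]
  set Q' := Biᵀ * QH * Bi with hQ'def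
  have hQ'feas : Q' ∈ feas K := by
    constructor
    · exact psd_congr hQH.1.1 Bi
    · intro g
      have : K g - Q' = Biᵀ * (H (σ g) - QH) * Bi := by
        rw [Matrix.mul_sub, Matrix.sub_mul, ← hrel g, hconj]
      rw [this]
      exact psd_congr (hQH.1.2 (σ g)) Bi
  have hdetQ' : Q'.det = QH.det / B.det ^ 2 := by
    rw [hQ'def, Matrix.det_mul, Matrix.det_mul, Matrix.det_transpose, hdetBi, pow_two,
      div_eq_mul_inv, mul_inv]
    ring
  have hle : Q'.det ≤ QK.det := hQK.2 _ hQ'feas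
  have hBd2 : (0:ℝ) < B.det ^ 2 := by positivity
  constructor
  · rw [hdetQ'] at hle
    calc QH.det = QH.det / B.det^2 * B.det^2 := by field_simp
    _ ≤ QK.det * B.det^2 := by apply mul_le_mul_of_nonneg_right hle hBd2.le
    _ = B.det^2 * QK.det := by ring
  · intro heq
    have hdeq : Q'.det = QK.det := by
      rw [hdetQ', heq]
      field_simp
    have hQ'max : IsMaxer K Q' := by
      refine ⟨hQ'feas, fun R hR => ?_⟩
      rw [hdeq]
      exact hQK.2 R hR
    have := maxer_unique hK hQ'max hQK
    rw [← this, hQ'def]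
    calc QH = (Bi * B)ᵀ * QH * (Bi * B) := by
          rw [hBiB, Matrix.transpose_one, one_mul, mul_one]
    _ = Bᵀ * (Biᵀ * QH * Bi) * B := by
          rw [Matrix.transpose_mul]
          simp only [Matrix.mul_assoc]

end Machinery

section OpBound

def OpBnd (M : Mat) (c : ℝ) : Prop := ∀ v : Fin n → ℝ, (M *ᵥ v) ⬝ᵥ (M *ᵥ v) ≤ c * (v ⬝ᵥ v)

lemma dot_self_nonneg (v : Fin n → ℝ) : 0 ≤ v ⬝ᵥ v :=
  Finset.sum_nonneg fun i _ => mul_self_nonneg _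

lemma dot_self_eq_norm (v : Fin n → ℝ) :
    v ⬝ᵥ v = ‖((WithLp.equiv 2 (Fin n → ℝ)).symm v : EuclideanSpace ℝ (Fin n))‖ ^ 2 := by
  rw [EuclideanSpace.norm_eq, Real.sq_sqrt (by positivity)]
  unfold dotProduct
  congr 1
  funext i
  rw [show ((WithLp.equiv 2 (Fin n → ℝ)).symm v).ofLp i = v i from rfl, Real.norm_eq_abs, sq_abs, pow_two]

lemma clm_apply_symm (M : Mat) (v : Fin n → ℝ) :
    Matrix.toEuclideanCLM (𝕜 := ℝ) M ((WithLp.equiv 2 (Fin n → ℝ)).symm v)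
      = (WithLp.equiv 2 (Fin n → ℝ)).symm (M *ᵥ v) := by
  rfl

lemma opbnd_of_norm {M : Mat} {c : ℝ} (h : ‖Matrix.toEuclideanCLM (𝕜 := ℝ) M‖ ≤ c) :
    OpBnd M (c ^ 2) := by
  intro v
  have hc0 : 0 ≤ c := le_trans (norm_nonneg _) h
  set w : EuclideanSpace ℝ (Fin n) := (WithLp.equiv 2 (Fin n → ℝ)).symm v with hw
  have hb := (Matrix.toEuclideanCLM (𝕜 := ℝ) M).le_opNorm w
  rw [hw, clm_apply_symm] at hb
  have hb2 : ‖((WithLp.equiv 2 (Fin n → ℝ)).symm (M *ᵥ v) : EuclideanSpace ℝ (Fin n))‖ ≤ c * ‖w‖ :=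
    le_trans hb (mul_le_mul_of_nonneg_right h (norm_nonneg _))
  have := mul_self_le_mul_self (norm_nonneg _) hb2
  rw [dot_self_eq_norm (M *ᵥ v), dot_self_eq_norm v, ← hw]
  calc ‖((WithLp.equiv 2 (Fin n → ℝ)).symm (M *ᵥ v) : EuclideanSpace ℝ (Fin n))‖ ^ 2
      = ‖((WithLp.equiv 2 (Fin n → ℝ)).symm (M *ᵥ v) : EuclideanSpace ℝ (Fin n))‖
        * ‖((WithLp.equiv 2 (Fin n → ℝ)).symm (M *ᵥ v) : EuclideanSpace ℝ (Fin n))‖ := by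
        rw [pow_two]
  _ ≤ (c * ‖w‖) * (c * ‖w‖) := this
  _ = c ^ 2 * ‖w‖ ^ 2 := by ring

lemma norm_of_opbnd {M : Mat} {c : ℝ} (hc : 0 ≤ c) (h : OpBnd M (c ^ 2)) :
    ‖Matrix.toEuclideanCLM (𝕜 := ℝ) M‖ ≤ c := by
  apply ContinuousLinearMap.opNorm_le_bound _ hc
  intro w
  set v : Fin n → ℝ := WithLp.equiv 2 (Fin n → ℝ) w with hv
  have hwv : (WithLp.equiv 2 (Fin n → ℝ)).symm v = w := by
    rw [hv]; exact (WithLp.equiv 2 (Fin n → ℝ)).symm_apply_apply w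
  have happ : Matrix.toEuclideanCLM (𝕜 := ℝ) M w
      = (WithLp.equiv 2 (Fin n → ℝ)).symm (M *ᵥ v) := by
    rw [← hwv, clm_apply_symm]
  have hb := h v
  rw [dot_self_eq_norm (M *ᵥ v), dot_self_eq_norm v, hwv] at hb
  have h1 : ‖Matrix.toEuclideanCLM (𝕜 := ℝ) M w‖ ^ 2 ≤ (c * ‖w‖) ^ 2 := by
    rw [happ]
    calc ‖((WithLp.equiv 2 (Fin n → ℝ)).symm (M *ᵥ v) : EuclideanSpace ℝ (Fin n))‖ ^ 2
        ≤ c ^ 2 * ‖w‖ ^ 2 := hb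
    _ = (c * ‖w‖) ^ 2 := by ring
  have h2 : (0:ℝ) ≤ c * ‖w‖ := mul_nonneg hc (norm_nonneg _)
  calc ‖Matrix.toEuclideanCLM (𝕜 := ℝ) M w‖
      = Real.sqrt (‖Matrix.toEuclideanCLM (𝕜 := ℝ) M w‖ ^ 2) := by
        rw [Real.sqrt_sq (norm_nonneg _)]
  _ ≤ Real.sqrt ((c * ‖w‖) ^ 2) := Real.sqrt_le_sqrt h1
  _ = c * ‖w‖ := Real.sqrt_sq h2

lemma opbnd_transpose {M : Mat} {c : ℝ} (hc : 0 ≤ c) (h : OpBnd M (c ^ 2)) :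
    OpBnd Mᵀ (c ^ 2) := by
  apply opbnd_of_norm
  have hstar : (Mᵀ : Mat) = star M := by
    rw [Matrix.star_eq_conjTranspose]
    ext i j; simp [Matrix.conjTranspose_apply]
  rw [hstar, map_star]
  rw [ContinuousLinearMap.star_eq_adjoint]
  rw [LinearIsometryEquiv.norm_map (ContinuousLinearMap.adjoint)]
  exact norm_of_opbnd hc h

lemma opbnd_mul {M N : Mat} {a b : ℝ} (ha : 0 ≤ a) (hb : 0 ≤ b)
    (hM : OpBnd M (a ^ 2)) (hN : OpBnd N (b ^ 2)) : OpBnd (M * N) ((a * b) ^ 2) := by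
  apply opbnd_of_norm
  rw [_root_.map_mul]
  calc ‖Matrix.toEuclideanCLM (𝕜 := ℝ) M * Matrix.toEuclideanCLM (𝕜 := ℝ) N‖
      ≤ ‖Matrix.toEuclideanCLM (𝕜 := ℝ) M‖ * ‖Matrix.toEuclideanCLM (𝕜 := ℝ) N‖ := norm_mul_le _ _
  _ ≤ a * b := mul_le_mul (norm_of_opbnd ha hM) (norm_of_opbnd hb hN) (norm_nonneg _) ha

lemma opbnd_closed {Y : Type*} [TopologicalSpace Y] {A : Y → Mat} (hA : Continuous A) (c : ℝ) :
    IsClosed {y : Y | OpBnd (A y) c} := by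
  have : {y : Y | OpBnd (A y) c} = ⋂ v : Fin n → ℝ,
      {y : Y | ((A y) *ᵥ v) ⬝ᵥ ((A y) *ᵥ v) ≤ c * (v ⬝ᵥ v)} := by
    ext y; simp [OpBnd, Set.mem_iInter]
  rw [this]
  refine isClosed_iInter fun v => isClosed_le ?_ continuous_const
  exact (hA.matrix_mulVec continuous_const).dotProduct
    (hA.matrix_mulVec continuous_const)

end OpBound

section PsdBounds

lemma herm_of_symm {M : Mat} (h : Mᵀ = M) : M.IsHermitian := by
  unfold Matrix.IsHermitian
  rw [ct_eq, h]

lemma qf_mul_self (M : Mat) (v : Fin n → ℝ) :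
    v ⬝ᵥ (Mᵀ * M) *ᵥ v = (M *ᵥ v) ⬝ᵥ (M *ᵥ v) := by
  have := qf_congr' 1 M v
  rw [Matrix.mul_one, Matrix.one_mulVec] at this
  exact this

lemma symm_mul_self (M : Mat) : (Mᵀ * M)ᵀ = Mᵀ * M := by
  rw [Matrix.transpose_mul, Matrix.transpose_transpose]

lemma psd_ub_of_opbnd {M : Mat} {c : ℝ} (h : OpBnd M c) :
    (c • (1:Mat) - Mᵀ * M).PosSemidef := by
  refine psd_iff'.mpr ⟨herm_of_symm ?_, fun v => ?_⟩
  · rw [Matrix.transpose_sub, Matrix.transpose_smul, Matrix.transpose_one, symm_mul_self]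
  · rw [Matrix.sub_mulVec, dotProduct_sub, qf_mul_self, Matrix.smul_mulVec,
      dotProduct_smul, Matrix.one_mulVec, smul_eq_mul]
    have := h v
    linarith

lemma psd_lb_of_opbnd {M N : Mat} {c : ℝ} (hc : 0 < c) (hNM : N * M = 1) (h : OpBnd N c) :
    (Mᵀ * M - c⁻¹ • (1:Mat)).PosSemidef := by
  refine psd_iff'.mpr ⟨herm_of_symm ?_, fun v => ?_⟩
  · rw [Matrix.transpose_sub, Matrix.transpose_smul, Matrix.transpose_one, symm_mul_self]
  · rw [Matrix.sub_mulVec, dotProduct_sub, qf_mul_self, Matrix.smul_mulVec,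
      dotProduct_smul, Matrix.one_mulVec, smul_eq_mul]
    have hvv : v ⬝ᵥ v ≤ c * ((M *ᵥ v) ⬝ᵥ (M *ᵥ v)) := by
      have := h (M *ᵥ v)
      rwa [Matrix.mulVec_mulVec, hNM, Matrix.one_mulVec] at this
    have h2 : c⁻¹ * (v ⬝ᵥ v) ≤ (M *ᵥ v) ⬝ᵥ (M *ᵥ v) := by
      rw [inv_mul_le_iff₀ hc]
      linarith
    linarith

end PsdBounds

section Sqrt

lemma sqrt_le_one {S Q : Mat} (hS : S.PosSemidef) (hSQ : S * S = Q)
    (hQ1 : (1 - Q).PosSemidef) : (1 - S).PosSemidef := by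
  refine psd_iff'.mpr ⟨herm_of_symm ?_, fun v => ?_⟩
  · rw [Matrix.transpose_sub, Matrix.transpose_one, sym_of_psd hS]
  · rw [Matrix.sub_mulVec, dotProduct_sub, Matrix.one_mulVec]
    have hq := psd_qf' hS v
    have hvv := dot_self_nonneg v
    have hcs : (v ⬝ᵥ S *ᵥ v) ^ 2 ≤ (v ⬝ᵥ v) * ((S *ᵥ v) ⬝ᵥ (S *ᵥ v)) := by
      have := Finset.sum_mul_sq_le_sq_mul_sq Finset.univ (fun i => v i) (fun i => (S *ᵥ v) i)
      simpa [dotProduct, pow_two] using this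
    have hs2 : (S *ᵥ v) ⬝ᵥ (S *ᵥ v) = v ⬝ᵥ Q *ᵥ v := by
      rw [← qf_mul_self S v, sym_of_psd hS, hSQ]
    have hq1 : v ⬝ᵥ Q *ᵥ v ≤ v ⬝ᵥ v := by
      have := psd_qf' hQ1 v
      rw [Matrix.sub_mulVec, dotProduct_sub, Matrix.one_mulVec] at this
      linarith
    have h3 : (v ⬝ᵥ S *ᵥ v) ^ 2 ≤ (v ⬝ᵥ v) ^ 2 := by
      calc (v ⬝ᵥ S *ᵥ v) ^ 2 ≤ (v ⬝ᵥ v) * ((S *ᵥ v) ⬝ᵥ (S *ᵥ v)) := hcs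
      _ = (v ⬝ᵥ v) * (v ⬝ᵥ Q *ᵥ v) := by rw [hs2]
      _ ≤ (v ⬝ᵥ v) ^ 2 := by rw [pow_two]; exact mul_le_mul_of_nonneg_left hq1 hvv
    nlinarith

lemma sqrt_tendsto {u : ℕ → Mat} {Q : Mat}
    (hu : ∀ k, (u k).PosSemidef ∧ (1 - u k).PosSemidef)
    (hlim : Tendsto u atTop (𝓝 Q))
    {S : ℕ → Mat} (hS : ∀ k, (S k).PosSemidef ∧ S k * S k = u k)
    {T : Mat} (hT : T.PosSemidef) (hTQ : T * T = Q) :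
    Tendsto S atTop (𝓝 T) := by
  apply tendsto_of_subseq_tendsto
  intro ns hns
  have hmem : ∀ k, S (ns k) ∈ {R : Mat | R.PosSemidef ∧ (1 - R).PosSemidef} := by
    intro k
    exact ⟨(hS (ns k)).1, sqrt_le_one (hS (ns k)).1 (hS (ns k)).2 (hu (ns k)).2⟩
  obtain ⟨L, hLmem, ms, hms, hmstend⟩ := isCompact_K.tendsto_subseq hmem
  refine ⟨ms, ?_⟩
  have hLL : L * L = Q := by
    have hmulcont : Continuous (fun p : Mat × Mat => p.1 * p.2) :=
      continuous_fst.matrix_mul continuous_snd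
    have h1 : Tendsto (fun k => S (ns (ms k)) * S (ns (ms k))) atTop (𝓝 (L * L)) :=
      (hmulcont.tendsto (L, L)).comp (hmstend.prodMk_nhds hmstend)
    have h2 : Tendsto (fun k => S (ns (ms k)) * S (ns (ms k))) atTop (𝓝 Q) := by
      have : (fun k => S (ns (ms k)) * S (ns (ms k))) = fun k => u (ns (ms k)) := by
        funext k; exact (hS (ns (ms k))).2
      rw [this]
      exact hlim.comp ((hns.comp hms.tendsto_atTop))
    exact tendsto_nhds_unique h1 h2
  have hLT : L = T := by
    open scoped MatrixOrder in
    have e1 := CFC.sqrt_mul_self L hLmem.1.nonneg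
    open scoped MatrixOrder in
    have e2 := CFC.sqrt_mul_self T hT.nonneg
    rw [hLL] at e1; rw [hTQ] at e2; rw [← e1, ← e2]
  rwa [hLT] at hmstend

end Sqrt

end BLC

open BLC in
/-- **Theorem A**: a linear cocycle over a minimal dynamics that is bounded (together with its
inverse) at some point is cohomologous to a cocycle taking values in the orthogonal group. -/
theorem bounded_linear_cocycle_cohomologous_to_orthogonal
    {X : Type*} [MetricSpace X] [CompactSpace X]
    {Γ : Type*} [Monoid Γ] {n : ℕ}
    (act : Γ → X → X)
    (hact_one : ∀ x, act 1 x = x)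
    (hact_mul : ∀ f g x, act (f * g) x = act f (act g x))
    (hact_cont : ∀ f, Continuous (act f))
    (hmin : ∀ x, Dense (Set.range fun f => act f x))
    (A : Γ → X → Matrix.GeneralLinearGroup (Fin n) ℝ)
    (hA_cont : ∀ f, Continuous fun x => (A f x : Matrix (Fin n) (Fin n) ℝ))
    (hA_coc : ∀ f g x, A (f * g) x = A f (act g x) * A g x)
    (x₀ : X) (C : ℝ) (hC : 0 < C)
    (hbound : ∀ f,
      max ‖Matrix.toEuclideanCLM (𝕜 := ℝ) (A f x₀ : Matrix (Fin n) (Fin n) ℝ)‖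
          ‖Matrix.toEuclideanCLM (𝕜 := ℝ) ((A f x₀)⁻¹ : Matrix (Fin n) (Fin n) ℝ)‖ ≤ C) :
    ∃ B : X → Matrix.GeneralLinearGroup (Fin n) ℝ,
      Continuous (fun x => (B x : Matrix (Fin n) (Fin n) ℝ)) ∧
      ∀ f x, ((B (act f x))⁻¹ * A f x * B x : Matrix (Fin n) (Fin n) ℝ) ∈
        Matrix.orthogonalGroup (Fin n) ℝ := by
  classical
  let Am : Γ → X → Matrix (Fin n) (Fin n) ℝ := fun f x => (A f x : Matrix (Fin n) (Fin n) ℝ)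
  let Nm : Γ → X → Matrix (Fin n) (Fin n) ℝ := fun f x => (Am f x)⁻¹
  have hNmu : ∀ f x, Nm f x = ((A f x)⁻¹ : Matrix.GeneralLinearGroup (Fin n) ℝ) :=
    fun f x => (Matrix.coe_units_inv (A f x)).symm
  -- A 1 x = 1
  have hA1 : ∀ x, A 1 x = 1 := by
    intro x
    have h := hA_coc 1 1 x
    rw [one_mul, hact_one] at h
    have h' : (A 1 x) * 1 = A 1 x * A 1 x := by rw [mul_one]; exact h
    exact (mul_left_cancel h').symm
  have hAm1 : ∀ x, Am 1 x = 1 := by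
    intro x
    show (A 1 x : Matrix (Fin n) (Fin n) ℝ) = 1
    rw [hA1 x, Units.val_one]
  have hNm1 : ∀ x, Nm 1 x = 1 := by
    intro x
    show (Am 1 x)⁻¹ = 1
    rw [hAm1 x, inv_one]
  have hAu : ∀ f x, IsUnit ((Am f x).det) := by
    intro f x
    exact (Matrix.isUnit_iff_isUnit_det _).mp ⟨A f x, rfl⟩
  have hAdet_ne : ∀ f x, (Am f x).det ≠ 0 := fun f x => (hAu f x).ne_zero
  have hNA : ∀ f x, Nm f x * Am f x = 1 := fun f x => Matrix.nonsing_inv_mul _ (hAu f x)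
  have hAN : ∀ f x, Am f x * Nm f x = 1 := fun f x => Matrix.mul_nonsing_inv _ (hAu f x)
  have hAc : ∀ f g x, Am (f * g) x = Am f (act g x) * Am g x := by
    intro f g x
    show (A (f * g) x : Matrix (Fin n) (Fin n) ℝ)
      = (A f (act g x) : Matrix (Fin n) (Fin n) ℝ) * (A g x : Matrix (Fin n) (Fin n) ℝ)
    rw [hA_coc f g x, Units.val_mul]
  have hNc : ∀ f g x, Nm (f * g) x = Nm g x * Nm f (act g x) := by
    intro f g x
    rw [hNmu, hNmu, hNmu, hA_coc f g x, _root_.mul_inv_rev, Units.val_mul]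
  have hNdet : ∀ f x, (Nm f x).det = ((Am f x).det)⁻¹ := by
    intro f x
    have h := congrArg Matrix.det (hNA f x)
    rw [Matrix.det_mul, Matrix.det_one] at h
    exact eq_inv_of_mul_eq_one_left h
  have hNdet_ne : ∀ f x, (Nm f x).det ≠ 0 := by
    intro f x
    rw [hNdet]
    exact inv_ne_zero (hAdet_ne f x)
  have hNmcont : ∀ f, Continuous (fun x => Nm f x) := by
    intro f
    have heq : (fun x => Nm f x) = fun x => ((Am f x).det)⁻¹ • (Am f x).adjugate := by
      funext x
      show (Am f x)⁻¹ = _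
      rw [Matrix.inv_def, Ring.inverse_eq_inv]
    rw [heq]
    exact (((hA_cont f).matrix_det).inv₀ (fun x => hAdet_ne f x)).smul
      ((hA_cont f).matrix_adjugate)
  -- global operator bounds
  have hb : ∀ f x, OpBnd (Am f x) ((C * C) ^ 2) ∧ OpBnd (Nm f x) ((C * C) ^ 2) := by
    intro f
    have hclosed : IsClosed {x : X | OpBnd (Am f x) ((C * C) ^ 2) ∧ OpBnd (Nm f x) ((C * C) ^ 2)} := by
      have hset : {x : X | OpBnd (Am f x) ((C * C) ^ 2) ∧ OpBnd (Nm f x) ((C * C) ^ 2)}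
          = {x : X | OpBnd (Am f x) ((C * C) ^ 2)} ∩ {x : X | OpBnd (Nm f x) ((C * C) ^ 2)} := rfl
      rw [hset]
      exact (opbnd_closed (hA_cont f) _).inter (opbnd_closed (hNmcont f) _)
    have horb : ∀ g : Γ, OpBnd (Am f (act g x₀)) ((C * C) ^ 2)
        ∧ OpBnd (Nm f (act g x₀)) ((C * C) ^ 2) := by
      intro g
      have hc1 : A f (act g x₀) = A (f * g) x₀ * (A g x₀)⁻¹ := by
        rw [hA_coc f g x₀, mul_inv_cancel_right]
      have hc2 : (A f (act g x₀))⁻¹ = A g x₀ * (A (f * g) x₀)⁻¹ := by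
        rw [hc1, _root_.mul_inv_rev, inv_inv]
      have hbA : ∀ h : Γ, ‖Matrix.toEuclideanCLM (𝕜 := ℝ) (Am h x₀)‖ ≤ C :=
        fun h => (le_max_left _ _).trans (hbound h)
      have hbN : ∀ h : Γ, ‖Matrix.toEuclideanCLM (𝕜 := ℝ) (Nm h x₀)‖ ≤ C :=
        fun h => (le_max_right _ _).trans (hbound h)
      constructor
      · have heq : Am f (act g x₀) = Am (f * g) x₀ * Nm g x₀ := by
          rw [hNmu, ← Units.val_mul, ← hc1]
        rw [heq]
        exact opbnd_mul hC.le hC.le (opbnd_of_norm (hbA (f * g))) (opbnd_of_norm (hbN g))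
      · have heq : Nm f (act g x₀) = Am g x₀ * Nm (f * g) x₀ := by
          rw [hNmu, hNmu, ← Units.val_mul, ← hc2]
        rw [heq]
        exact opbnd_mul hC.le hC.le (opbnd_of_norm (hbA g)) (opbnd_of_norm (hbN (f * g)))
    intro x
    have hsub : Set.range (fun g => act g x₀)
        ⊆ {x : X | OpBnd (Am f x) ((C * C) ^ 2) ∧ OpBnd (Nm f x) ((C * C) ^ 2)} := by
      rintro _ ⟨g, rfl⟩; exact horb g
    have hcl := (IsClosed.closure_subset_iff hclosed).mpr hsub
    rw [(hmin x₀).closure_eq] at hcl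
    exact hcl (Set.mem_univ x)
  -- the two families
  let Fm : Γ → X → Matrix (Fin n) (Fin n) ℝ := fun g x => (Am g x)ᵀ * Am g x
  let Gm : Γ → X → Matrix (Fin n) (Fin n) ℝ := fun g x => Nm g x * (Nm g x)ᵀ
  let cst : ℝ := (((C * C) ^ 2))⁻¹
  have hcst_pos : 0 < cst := by positivity
  have hGood1 : ∀ x, Good (fun g => Fm g x) cst := by
    intro x
    refine ⟨hcst_pos, ?_, ?_⟩
    · show (Am 1 x)ᵀ * Am 1 x = 1
      rw [hAm1 x, Matrix.transpose_one, mul_one]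
    · intro g
      exact psd_lb_of_opbnd (by positivity) (hNA g x) (hb g x).2
  have hGood2 : ∀ x, Good (fun g => Gm g x) cst := by
    intro x
    refine ⟨hcst_pos, ?_, ?_⟩
    · show Nm 1 x * (Nm 1 x)ᵀ = 1
      rw [hNm1 x, Matrix.transpose_one, mul_one]
    · intro g
      have hpart : (Am g x)ᵀ * (Nm g x)ᵀ = 1 := by
        rw [← Matrix.transpose_mul, hNA g x, Matrix.transpose_one]
      have h2 := psd_lb_of_opbnd (by positivity) hpart
        (opbnd_transpose (by positivity) (hb g x).1)
      rw [Matrix.transpose_transpose] at h2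
      exact h2
  -- maximizers
  have hex1 : ∀ x, ∃ Q, IsMaxer (fun g => Fm g x) Q := fun x => exists_maxer (hGood1 x)
  have hex2 : ∀ x, ∃ Q, IsMaxer (fun g => Gm g x) Q := fun x => exists_maxer (hGood2 x)
  choose P1 hP1 using hex1
  choose P2 hP2 using hex2
  -- dynamical step inequalities
  have step1 : ∀ f x, (P1 x).det ≤ ((Am f x).det) ^ 2 * (P1 (act f x)).det ∧
      ((P1 x).det = ((Am f x).det) ^ 2 * (P1 (act f x)).det →
        P1 x = (Am f x)ᵀ * P1 (act f x) * Am f x) := by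
    intro f x
    refine maxer_push (hGood1 x) (hGood1 (act f x)) (fun g => g * f) (Am f x)
      (hAdet_ne f x) ?_ (hP1 x) (hP1 (act f x))
    intro g
    show (Am f x)ᵀ * ((Am g (act f x))ᵀ * Am g (act f x)) * Am f x
        = (Am (g * f) x)ᵀ * Am (g * f) x
    rw [hAc g f x, Matrix.transpose_mul]
    simp only [Matrix.mul_assoc]
  have step2 : ∀ f x, (P2 x).det ≤ (((Nm f x)ᵀ).det) ^ 2 * (P2 (act f x)).det ∧
      ((P2 x).det = (((Nm f x)ᵀ).det) ^ 2 * (P2 (act f x)).det →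
        P2 x = ((Nm f x)ᵀ)ᵀ * P2 (act f x) * (Nm f x)ᵀ) := by
    intro f x
    refine maxer_push (hGood2 x) (hGood2 (act f x)) (fun g => g * f) ((Nm f x)ᵀ)
      (by rw [Matrix.det_transpose]; exact hNdet_ne f x) ?_ (hP2 x) (hP2 (act f x))
    intro g
    show ((Nm f x)ᵀ)ᵀ * (Nm g (act f x) * (Nm g (act f x))ᵀ) * (Nm f x)ᵀ
        = Nm (g * f) x * (Nm (g * f) x)ᵀ
    rw [hNc g f x, Matrix.transpose_transpose, Matrix.transpose_mul]
    simp only [Matrix.mul_assoc]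
  -- determinant bounds
  have hd1pos : ∀ x, 0 < (P1 x).det := fun x => maxer_det_pos (hGood1 x) (hP1 x)
  have hd2pos : ∀ x, 0 < (P2 x).det := fun x => maxer_det_pos (hGood2 x) (hP2 x)
  have hd1le : ∀ x, (P1 x).det ≤ 1 := fun x => maxer_det_le_one (hGood1 x) (hP1 x)
  have hd2le : ∀ x, (P2 x).det ≤ 1 := fun x => maxer_det_le_one (hGood2 x) (hP2 x)
  let hfun : X → ℝ := fun x => (P1 x).det * (P2 x).det
  have hmono : ∀ f x, hfun x ≤ hfun (act f x) := by
    intro f x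
    have h1 := (step1 f x).1
    have h2 := (step2 f x).1
    rw [Matrix.det_transpose, hNdet] at h2
    have hmul := mul_le_mul h1 h2 (hd2pos x).le
      (mul_nonneg (by positivity) (hd1pos (act f x)).le)
    refine le_trans hmul (le_of_eq ?_)
    show ((Am f x).det ^ 2 * (P1 (act f x)).det) * (((Am f x).det⁻¹) ^ 2 * (P2 (act f x)).det)
        = (P1 (act f x)).det * (P2 (act f x)).det
    have hd := hAdet_ne f x
    field_simp
    try ring
  -- upper semicontinuity of the two determinant functions
  have husc1 : ∀ (x : X) (u : ℕ → X), Tendsto u atTop (𝓝 x) → ∀ ε > 0,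
      ∀ᶠ k in atTop, (P1 (u k)).det < (P1 x).det + ε := by
    intro x u hu ε hε
    by_contra hcon
    rw [Filter.not_eventually] at hcon
    have hfreq : ∃ᶠ k in atTop, (P1 x).det + ε ≤ (P1 (u k)).det :=
      hcon.mono fun k hk => not_lt.mp hk
    obtain ⟨ns, hns_mono, hns⟩ := Filter.extraction_of_frequently_atTop hfreq
    have hmem : ∀ k, P1 (u (ns k))
        ∈ {R : Matrix (Fin n) (Fin n) ℝ | R.PosSemidef ∧ (1 - R).PosSemidef} :=
      fun k => feas_subset_K (hGood1 (u (ns k))) (hP1 (u (ns k))).1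
    obtain ⟨L, hLK, ms, hms_mono, hms⟩ := isCompact_K.tendsto_subseq hmem
    have hseq : Tendsto (fun k => u (ns (ms k))) atTop (𝓝 x) :=
      hu.comp ((hns_mono.comp hms_mono).tendsto_atTop)
    have hLfeas : L ∈ feas (fun g => Fm g x) := by
      refine ⟨hLK.1, fun g => ?_⟩
      have htend : Tendsto (fun k => Fm g (u (ns (ms k))) - P1 (u (ns (ms k)))) atTop
          (𝓝 (Fm g x - L)) := by
        apply Filter.Tendsto.sub
        · exact (((hA_cont g).matrix_transpose.matrix_mul (hA_cont g)).tendsto x).comp hseq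
        · exact hms
      exact isClosed_psd.mem_of_tendsto htend (Filter.Eventually.of_forall fun k =>
        (hP1 (u (ns (ms k)))).1.2 g)
    have hdet_tend : Tendsto (fun k => (P1 (u (ns (ms k)))).det) atTop (𝓝 L.det) :=
      ((continuous_id.matrix_det).tendsto L).comp hms
    have hge : (P1 x).det + ε ≤ L.det :=
      ge_of_tendsto hdet_tend (Filter.Eventually.of_forall fun k => hns (ms k))
    have hle : L.det ≤ (P1 x).det := (hP1 x).2 L hLfeas
    linarith
  have husc2 : ∀ (x : X) (u : ℕ → X), Tendsto u atTop (𝓝 x) → ∀ ε > 0,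
      ∀ᶠ k in atTop, (P2 (u k)).det < (P2 x).det + ε := by
    intro x u hu ε hε
    by_contra hcon
    rw [Filter.not_eventually] at hcon
    have hfreq : ∃ᶠ k in atTop, (P2 x).det + ε ≤ (P2 (u k)).det :=
      hcon.mono fun k hk => not_lt.mp hk
    obtain ⟨ns, hns_mono, hns⟩ := Filter.extraction_of_frequently_atTop hfreq
    have hmem : ∀ k, P2 (u (ns k))
        ∈ {R : Matrix (Fin n) (Fin n) ℝ | R.PosSemidef ∧ (1 - R).PosSemidef} :=
      fun k => feas_subset_K (hGood2 (u (ns k))) (hP2 (u (ns k))).1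
    obtain ⟨L, hLK, ms, hms_mono, hms⟩ := isCompact_K.tendsto_subseq hmem
    have hseq : Tendsto (fun k => u (ns (ms k))) atTop (𝓝 x) :=
      hu.comp ((hns_mono.comp hms_mono).tendsto_atTop)
    have hLfeas : L ∈ feas (fun g => Gm g x) := by
      refine ⟨hLK.1, fun g => ?_⟩
      have htend : Tendsto (fun k => Gm g (u (ns (ms k))) - P2 (u (ns (ms k)))) atTop
          (𝓝 (Gm g x - L)) := by
        apply Filter.Tendsto.sub
        · exact (((hNmcont g).matrix_mul (hNmcont g).matrix_transpose).tendsto x).comp hseq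
        · exact hms
      exact isClosed_psd.mem_of_tendsto htend (Filter.Eventually.of_forall fun k =>
        (hP2 (u (ns (ms k)))).1.2 g)
    have hdet_tend : Tendsto (fun k => (P2 (u (ns (ms k)))).det) atTop (𝓝 L.det) :=
      ((continuous_id.matrix_det).tendsto L).comp hms
    have hge : (P2 x).det + ε ≤ L.det :=
      ge_of_tendsto hdet_tend (Filter.Eventually.of_forall fun k => hns (ms k))
    have hle : L.det ≤ (P2 x).det := (hP2 x).2 L hLfeas
    linarith
  have huscH : ∀ (x : X) (u : ℕ → X), Tendsto u atTop (𝓝 x) → ∀ ε > 0,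
      ∀ᶠ k in atTop, hfun (u k) < hfun x + ε := by
    intro x u hu ε hε
    have hε'pos : 0 < min 1 (ε / 4) := lt_min one_pos (by linarith)
    filter_upwards [husc1 x u hu _ hε'pos, husc2 x u hu _ hε'pos] with k h1 h2
    have b1 := hd1pos (u k); have b2 := hd2pos (u k)
    have b3 := hd1le (u k); have b4 := hd2le (u k)
    have b5 := hd1pos x; have b6 := hd2pos x
    have b7 := hd1le x; have b8 := hd2le x
    have e1 : min 1 (ε / 4) ≤ 1 := min_le_left _ _
    have e2 : min 1 (ε / 4) ≤ ε / 4 := min_le_right _ _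
    show (P1 (u k)).det * (P2 (u k)).det < (P1 x).det * (P2 x).det + ε
    nlinarith [mul_pos b1 b2, mul_pos b5 b6, hε'pos]
  -- hfun is constant
  have hle_all : ∀ x y, hfun y ≤ hfun x := by
    intro x y
    by_contra hlt
    push_neg at hlt
    have hx_cl : x ∈ closure (Set.range fun g => act g y) := by
      rw [(hmin y).closure_eq]; trivial
    obtain ⟨u, hu_mem, hu_t⟩ := mem_closure_iff_seq_limit.mp hx_cl
    have hge : ∀ k, hfun y ≤ hfun (u k) := by
      intro k
      obtain ⟨g, hg⟩ := hu_mem k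
      rw [← hg]
      exact hmono g y
    have hev := huscH x u hu_t ((hfun y - hfun x) / 2) (by linarith)
    obtain ⟨k, hk⟩ := hev.exists
    have := hge k
    linarith
  have hconst : ∀ x y, hfun x = hfun y := fun x y => le_antisymm (hle_all y x) (hle_all x y)
  -- exact equivariance of P1
  have heq1 : ∀ f x, P1 x = (Am f x)ᵀ * P1 (act f x) * Am f x := by
    intro f x
    apply (step1 f x).2
    have h1 := (step1 f x).1
    have h2 := (step2 f x).1
    rw [Matrix.det_transpose, hNdet] at h2
    have hh : hfun x = hfun (act f x) := hconst x (act f x)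
    by_contra hne
    have hlt : (P1 x).det < ((Am f x).det) ^ 2 * (P1 (act f x)).det := lt_of_le_of_ne h1 hne
    have hstrict : hfun x < hfun (act f x) := by
      have c1 : hfun x < (((Am f x).det) ^ 2 * (P1 (act f x)).det) * (P2 x).det :=
        mul_lt_mul_of_pos_right hlt (hd2pos x)
      have c2 : (((Am f x).det) ^ 2 * (P1 (act f x)).det) * (P2 x).det
          ≤ (((Am f x).det) ^ 2 * (P1 (act f x)).det) * ((((Am f x).det)⁻¹) ^ 2 * (P2 (act f x)).det) := by
        apply mul_le_mul_of_nonneg_left h2 (mul_nonneg (by positivity) (hd1pos (act f x)).le)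
      have c3 : (((Am f x).det) ^ 2 * (P1 (act f x)).det) * ((((Am f x).det)⁻¹) ^ 2 * (P2 (act f x)).det)
          = hfun (act f x) := by
        show _ = (P1 (act f x)).det * (P2 (act f x)).det
        have hd := hAdet_ne f x
        field_simp
        try ring
      linarith
    linarith [hh]
  -- determinant of P1 is continuous along sequences
  have hκ : ∀ y, (P1 y).det * (P2 y).det = hfun x₀ := fun y => hconst y x₀
  have hm : (0:ℝ) < cst ^ n := pow_pos hcst_pos n
  have hΦ2lb : ∀ y, cst ^ n ≤ (P2 y).det := fun y => maxer_det_lb (hGood2 y) (hP2 y)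
  have hdet1_tendsto : ∀ (x : X) (u : ℕ → X), Tendsto u atTop (𝓝 x) →
      Tendsto (fun k => (P1 (u k)).det) atTop (𝓝 ((P1 x).det)) := by
    intro x u hu
    rw [Metric.tendsto_atTop]
    intro ε hε
    have hδpos : 0 < min (ε / 2) (ε * cst ^ n / 2) := lt_min (by linarith) (by positivity)
    have hev1 := husc1 x u hu _ hδpos
    have hev2 := husc2 x u hu _ hδpos
    rw [Filter.eventually_atTop] at hev1 hev2
    obtain ⟨N1, hN1⟩ := hev1
    obtain ⟨N2, hN2⟩ := hev2
    refine ⟨max N1 N2, fun k hk => ?_⟩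
    have h1 := hN1 k (le_trans (le_max_left _ _) hk)
    have h2 := hN2 k (le_trans (le_max_right _ _) hk)
    rw [Real.dist_eq, abs_lt]
    have e1 : min (ε / 2) (ε * cst ^ n / 2) ≤ ε / 2 := min_le_left _ _
    have e2 : min (ε / 2) (ε * cst ^ n / 2) ≤ ε * cst ^ n / 2 := min_le_right _ _
    have hab : (P1 (u k)).det * (P2 (u k)).det = (P1 x).det * (P2 x).det := by
      rw [hκ, hκ]
    constructor
    · have hkey : ((P1 x).det - (P1 (u k)).det) * (P2 x).det
          < min (ε / 2) (ε * cst ^ n / 2) := by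
        nlinarith [hd1le (u k), hd2pos x, hd1pos (u k)]
      nlinarith [hΦ2lb x, hd2pos x, hm]
    · linarith
  -- continuity of P1
  have hP1cont : Continuous P1 := by
    apply SeqContinuous.continuous
    intro u x hu
    apply tendsto_of_subseq_tendsto
    intro ns hns
    have hmem : ∀ k, P1 (u (ns k))
        ∈ {R : Matrix (Fin n) (Fin n) ℝ | R.PosSemidef ∧ (1 - R).PosSemidef} :=
      fun k => feas_subset_K (hGood1 (u (ns k))) (hP1 (u (ns k))).1
    obtain ⟨L, hLK, ms, hms_mono, hms⟩ := isCompact_K.tendsto_subseq hmem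
    have hseq : Tendsto (fun k => u (ns (ms k))) atTop (𝓝 x) :=
      hu.comp (hns.comp hms_mono.tendsto_atTop)
    have hLfeas : L ∈ feas (fun g => Fm g x) := by
      refine ⟨hLK.1, fun g => ?_⟩
      have htend : Tendsto (fun k => Fm g (u (ns (ms k))) - P1 (u (ns (ms k)))) atTop
          (𝓝 (Fm g x - L)) := by
        apply Filter.Tendsto.sub
        · exact (((hA_cont g).matrix_transpose.matrix_mul (hA_cont g)).tendsto x).comp hseq
        · exact hms
      exact isClosed_psd.mem_of_tendsto htend (Filter.Eventually.of_forall fun k =>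
        (hP1 (u (ns (ms k)))).1.2 g)
    have hdetL : L.det = (P1 x).det := by
      have t1 : Tendsto (fun k => (P1 (u (ns (ms k)))).det) atTop (𝓝 L.det) :=
        ((continuous_id.matrix_det).tendsto L).comp hms
      have t2 : Tendsto (fun k => (P1 (u (ns (ms k)))).det) atTop (𝓝 ((P1 x).det)) :=
        hdet1_tendsto x _ hseq
      exact tendsto_nhds_unique t1 t2
    have hLmax : IsMaxer (fun g => Fm g x) L := by
      refine ⟨hLfeas, fun R hR => ?_⟩
      rw [hdetL]
      exact (hP1 x).2 R hR
    have hLP1 : L = P1 x := maxer_unique (hGood1 x) hLmax (hP1 x)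
    exact ⟨ms, by rw [← hLP1]; exact hms⟩
  -- square roots
  have hP1pd : ∀ x, (P1 x).PosDef := fun x => maxer_pd (hGood1 x) (hP1 x)
  have hP1K : ∀ x, (P1 x).PosSemidef ∧ (1 - P1 x).PosSemidef :=
    fun x => feas_subset_K (hGood1 x) (hP1 x).1
  open scoped MatrixOrder in
  let S : X → Matrix (Fin n) (Fin n) ℝ := fun x => CFC.sqrt (P1 x)
  open scoped MatrixOrder in
  have hSpsd : ∀ x, (S x).PosSemidef := fun x => (CFC.sqrt_nonneg (P1 x)).posSemidef
  open scoped MatrixOrder in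
  have hSS : ∀ x, S x * S x = P1 x := fun x =>
    CFC.sqrt_mul_sqrt_self (P1 x) (hP1pd x).posSemidef.nonneg
  have hSdet_ne : ∀ x, (S x).det ≠ 0 := by
    intro x h0
    have hdd : (S x).det * (S x).det = (P1 x).det := by rw [← Matrix.det_mul, hSS]
    rw [h0, mul_zero] at hdd
    exact (hd1pos x).ne hdd
  have hSunit : ∀ x, IsUnit ((S x).det) := fun x => isUnit_iff_ne_zero.mpr (hSdet_ne x)
  have hSsym : ∀ x, (S x)ᵀ = S x := fun x => sym_of_psd (hSpsd x)
  have hScont : Continuous S := by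
    apply SeqContinuous.continuous
    intro u x hu
    exact sqrt_tendsto (fun k => hP1K (u k)) ((hP1cont.tendsto x).comp hu)
      (fun k => ⟨hSpsd (u k), hSS (u k)⟩) (hSpsd x) (hSS x)
  -- the conjugating cocycle
  let Bu : X → Matrix.GeneralLinearGroup (Fin n) ℝ := fun x =>
    ⟨(S x)⁻¹, S x, Matrix.nonsing_inv_mul (S x) (hSunit x),
      Matrix.mul_nonsing_inv (S x) (hSunit x)⟩
  refine ⟨Bu, ?_, ?_⟩
  · have heq : (fun x => ((Bu x : Matrix (Fin n) (Fin n) ℝ)))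
        = fun x => ((S x).det)⁻¹ • (S x).adjugate := by
      funext x
      show (S x)⁻¹ = _
      rw [Matrix.inv_def, Ring.inverse_eq_inv]
    rw [heq]
    exact ((hScont.matrix_det).inv₀ hSdet_ne).smul (hScont.matrix_adjugate)
  · intro f x
    rw [Matrix.mem_orthogonalGroup_iff']
    show star (S (act f x) * Am f x * (S x)⁻¹) * (S (act f x) * Am f x * (S x)⁻¹) = 1
    rw [Matrix.star_eq_conjTranspose, ct_eq]
    have hinvT : ((S x)⁻¹)ᵀ = (S x)⁻¹ := by
      rw [Matrix.transpose_nonsing_inv, hSsym x]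
    rw [Matrix.transpose_mul, Matrix.transpose_mul, hinvT, hSsym (act f x)]
    simp only [Matrix.mul_assoc]
    rw [← Matrix.mul_assoc (S (act f x)) (S (act f x)), hSS (act f x)]
    have hmid : (Am f x)ᵀ * (P1 (act f x) * (Am f x * (S x)⁻¹)) = P1 x * (S x)⁻¹ := by
      calc (Am f x)ᵀ * (P1 (act f x) * (Am f x * (S x)⁻¹))
          = ((Am f x)ᵀ * P1 (act f x) * Am f x) * (S x)⁻¹ := by
            simp only [Matrix.mul_assoc]
      _ = P1 x * (S x)⁻¹ := by rw [← heq1 f x]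
    rw [hmid, ← hSS x, Matrix.mul_assoc (S x) (S x) ((S x)⁻¹),
      Matrix.mul_nonsing_inv _ (hSunit x), mul_one, Matrix.nonsing_inv_mul _ (hSunit x)]
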